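/- arXiv:cs/0502064 — 2 statements merged into one kernel-verified Lean document; each statement's English description precedes it below -/
import Mathlib

section
/- Every initial Mealy machine transforms an ultimately recurrent infinite word to an ultimately recurrent infinite word. -/
/-- A Mealy machine with state set `Q`, input alphabet `A`, output alphabet `B`. -/
structure Mealy (Q A B : Type*) where
  step : Q → A → Q
  out  : Q → A → B

namespace Mealy

variable {Q A B : Type*}

/-- Extension of the transition function to finite words. -/
def stepW (M : Mealy Q A B) : Q → List A → Q
  | q, [] => q
  | q, a :: u => M.stepW (M.step q a) u

/-- Extension of the output function to finite words. -/
def outW (M : Mealy Q A B) : Q → List A → List B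
  | _, [] => []
  | q, a :: u => M.out q a :: M.outW (M.step q a) u

end Mealy

/-- The length-`n` prefix `x[0,n-1]` of an infinite word. -/
def wordPrefix {A : Type*} (x : ℕ → A) (n : ℕ) : List A :=
  List.ofFn (fun i : Fin n => x i)

/-- The initial machine `(M, q₀)` transforms the infinite word `x` to `y`. -/
def Mealy.Transforms {Q A B : Type*} (M : Mealy Q A B) (q₀ : Q)
    (x : ℕ → A) (y : ℕ → B) : Prop :=
  ∀ n, wordPrefix y n = M.outW q₀ (wordPrefix x n)

/-- `w` occurs in the infinite word `x` at position `m`. -/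
def IsFactorAt {A : Type*} (x : ℕ → A) (w : List A) (m : ℕ) : Prop :=
  w = List.ofFn (fun i : Fin w.length => x (m + i))

/-- `w` is a factor of the infinite word `x`. -/
def IsFactor {A : Type*} (x : ℕ → A) (w : List A) : Prop :=
  ∃ m, IsFactorAt x w m

/-- An infinite word is recurrent if every factor occurs infinitely often. -/
def Recurrent {A : Type*} (x : ℕ → A) : Prop :=
  ∀ w, IsFactor x w → ∀ N, ∃ m ≥ N, IsFactorAt x w m

/-- `x` is ultimately recurrent: some suffix of `x` is recurrent. -/
def UltimatelyRecurrent {A : Type*} (x : ℕ → A) : Prop :=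
  ∃ k, Recurrent (fun n => x (n + k))

/-- The infinite word `u v^ω`. -/
def upWord {A : Type*} (u v : List A) (hv : v ≠ []) : ℕ → A :=
  fun n =>
    if h : n < u.length then u.get ⟨n, h⟩
    else v.get ⟨(n - u.length) % v.length, Nat.mod_lt _ (List.length_pos_iff.mpr hv)⟩

/-- `x` is ultimately periodic: `x = u v^ω`. -/
def UltimatelyPeriodic {A : Type*} (x : ℕ → A) : Prop :=
  ∃ (u v : List A) (hv : v ≠ []), x = upWord u v hv

/-- The subword complexity `f_x(n)`: number of distinct length-`n` factors of `x`. -/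
noncomputable def complexity {A : Type*} (x : ℕ → A) (n : ℕ) : ℕ :=
  Set.ncard {w : List A | w.length = n ∧ IsFactor x w}

/-- The growth function `g_x(n) = ∑_{i=0}^n f_x(i)`. -/
noncomputable def growth {A : Type*} (x : ℕ → A) (n : ℕ) : ℕ :=
  ∑ i ∈ Finset.range (n + 1), complexity x i

/-- The series (cascade) composition of two Mealy machines. -/
def Mealy.series {Q₁ Q₂ A B₁ B₂ : Type*} (M₁ : Mealy Q₁ A B₁)
    (M₂ : Mealy Q₂ B₁ B₂) : Mealy (Q₁ × Q₂) A B₂ where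
  step := fun p a => (M₁.step p.1 a, M₂.step p.2 (M₁.out p.1 a))
  out  := fun p a => M₂.out p.2 (M₁.out p.1 a)

/-- An initial Mealy machine over the fixed countable alphabet ℕ:
finite state set `Fin k`, finite input and output alphabets `A, B ⊆ ℕ`. -/
structure MachineN where
  k : ℕ
  A : Finset ℕ
  B : Finset ℕ
  M : Mealy (Fin k) A B
  q₀ : Fin k

/-- `V` transforms the ℕ-valued infinite word `x` (which must be apt for `V`,
i.e. take values in `V.A`) to `y`. -/
def MachineN.TransformsN (V : MachineN) (x y : ℕ → ℕ) : Prop :=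
  ∃ (x' : ℕ → V.A) (y' : ℕ → V.B),
    (∀ n, (x' n : ℕ) = x n) ∧ (∀ n, (y' n : ℕ) = y n) ∧
    V.M.Transforms V.q₀ x' y'

/-- `x ⇀ y` : some initial Mealy machine transforms `x` to `y`. -/
def TransN (x y : ℕ → ℕ) : Prop := ∃ V : MachineN, V.TransformsN x y

/-- The set 𝔉 of all infinite words over finite subalphabets of ℕ. -/
def FWords : Set (ℕ → ℕ) := {x | (Set.range x).Finite}

/-- A nonempty set of infinite words is machine invariant if every initial
Mealy machine transforms all apt words of it into words of it. -/
def MachineInvariant (K : Set (ℕ → ℕ)) : Prop :=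
  K.Nonempty ∧ K ⊆ FWords ∧ ∀ x ∈ K, ∀ y, TransN x y → y ∈ K

section AuxLemmas

namespace Mealy

variable {Q A B : Type*}

lemma stepW_append (M : Mealy Q A B) (q : Q) (u v : List A) :
    M.stepW q (u ++ v) = M.stepW (M.stepW q u) v := by
  induction u generalizing q with
  | nil => rfl
  | cons a u ih => simp only [List.cons_append, Mealy.stepW]; exact ih _

lemma outW_append (M : Mealy Q A B) (q : Q) (u v : List A) :
    M.outW q (u ++ v) = M.outW q u ++ M.outW (M.stepW q u) v := by
  induction u generalizing q with
  | nil => rfl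
  | cons a u ih => simp only [List.cons_append, Mealy.outW, Mealy.stepW, List.cons_append,
      List.cons.injEq, true_and]; exact ih _

end Mealy

lemma wordPrefix_succ {A : Type*} (x : ℕ → A) (n : ℕ) :
    wordPrefix x (n + 1) = wordPrefix x n ++ [x n] := by
  rw [wordPrefix, List.ofFn_succ', List.concat_eq_append]
  simp [wordPrefix]

lemma isFactorAt_apply {A : Type*} (X : ℕ → A) (w : List A) (m : ℕ)
    (h : IsFactorAt X w m) (i : ℕ) (hi : i < w.length) : w[i] = X (m + i) := by
  rw [List.getElem_of_eq h, List.getElem_ofFn]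

lemma isFactorAt_ofFn {A : Type*} (X : ℕ → A) (t n : ℕ) :
    IsFactorAt X (List.ofFn fun i : Fin n => X (t + i)) t := by
  unfold IsFactorAt
  apply List.ext_getElem
  · simp
  · intro i h1 h2
    simp

lemma isFactorAt_of_ptwise {A : Type*} (Y : ℕ → A) (w : List A) (ρ m : ℕ)
    (hρ : IsFactorAt Y w ρ) (hpt : ∀ i < w.length, Y (m + i) = Y (ρ + i)) :
    IsFactorAt Y w m := by
  unfold IsFactorAt
  apply List.ext_getElem
  · simp
  · intro i h1 h2
    rw [List.getElem_ofFn, isFactorAt_apply Y w ρ hρ i h1, hpt i h1]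

lemma core_lemma {Q A : Type*} [Fintype Q] (X : ℕ → A) (p : ℕ → Q)
    (hR : ∀ t n N, ∃ m ≥ N, ∀ i < n, X (m + i) = X (t + i)) :
    ∃ t, ∀ n N, ∃ m ≥ N, p m = p t ∧ ∀ i < n, X (m + i) = X (t + i) := by
  classical
  let T : ℕ → ℕ → Set Q := fun t n =>
    {s | ∀ N, ∃ m ≥ N, p m = s ∧ ∀ i < n, X (m + i) = X (t + i)}
  have hmono : ∀ t {n n'}, n ≤ n' → T t n' ⊆ T t n := by
    intro t n n' hnn s hs N
    obtain ⟨m, hm, h1, h2⟩ := hs N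
    exact ⟨m, hm, h1, fun i hi => h2 i (lt_of_lt_of_le hi hnn)⟩
  have hne : ∀ t n, (T t n).Nonempty := by
    intro t n
    by_contra hcon
    rw [Set.not_nonempty_iff_eq_empty] at hcon
    have hs : ∀ s : Q, ∃ N, ∀ m ≥ N, ¬(p m = s ∧ ∀ i < n, X (m + i) = X (t + i)) := by
      intro s
      by_contra hc
      push_neg at hc
      have hmem : s ∈ T t n := by
        intro N
        obtain ⟨m, hm, hh⟩ := hc N
        exact ⟨m, hm, hh⟩
      rw [hcon] at hmem
      exact hmem
    choose Ns hNs using hs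
    obtain ⟨b, hb⟩ := (Set.finite_range Ns).bddAbove
    obtain ⟨m, hm, hmatch⟩ := hR t n b
    exact hNs (p m) m (le_trans (hb (Set.mem_range_self (p m))) hm) ⟨rfl, hmatch⟩
  let F : ℕ → Set Q := fun t => ⋂ n, T t n
  have hFsub : ∀ t n, F t ⊆ T t n := fun t n => Set.iInter_subset _ n
  have hstab : ∀ t, ∃ b, T t b ⊆ F t := by
    intro t
    have hs : ∀ s : Q, ∃ ns, s ∈ F t ∨ s ∉ T t ns := by
      intro s
      by_cases hsF : s ∈ F t
      · exact ⟨0, Or.inl hsF⟩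
      · rw [show F t = ⋂ n, T t n from rfl, Set.mem_iInter] at hsF
        push_neg at hsF
        obtain ⟨n, hn⟩ := hsF
        exact ⟨n, Or.inr hn⟩
    choose ns hns using hs
    obtain ⟨b, hb⟩ := (Set.finite_range ns).bddAbove
    refine ⟨b, fun s hs' => ?_⟩
    rcases hns s with hh | hh
    · exact hh
    · exact absurd (hmono t (hb (Set.mem_range_self s)) hs') hh
  have hFne : ∀ t, (F t).Nonempty := by
    intro t
    obtain ⟨b, hb⟩ := hstab t
    exact (hne t b).mono hb
  have lemA : ∀ t, ∃ t', p t' ∈ F t ∧ F t' ⊆ F t := by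
    intro t
    obtain ⟨b, hb⟩ := hstab t
    obtain ⟨s, hsF⟩ := hFne t
    obtain ⟨m, -, hpm, hmatch⟩ := (hFsub t b hsF) 0
    refine ⟨m, hpm ▸ hsF, fun s'' hs'' => ?_⟩
    apply hb
    intro N
    obtain ⟨m'', hm'', h1, h2⟩ := (hFsub m b hs'') N
    exact ⟨m'', hm'', h1, fun i hi => (h2 i hi).trans (hmatch i hi)⟩
  by_contra hcon
  push_neg at hcon
  have hnotmem : ∀ t, p t ∉ F t := by
    intro t hmem
    obtain ⟨n, N, hN⟩ := hcon t
    obtain ⟨m, hm, h1, h2⟩ := (hFsub t n hmem) N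
    obtain ⟨i, hi, hix⟩ := hN m hm h1
    exact hix (h2 i hi)
  choose g hg1 hg2 using lemA
  have hss : ∀ t, F (g t) ⊂ F t := by
    intro t
    rw [Set.ssubset_def]
    exact ⟨hg2 t, fun hsup => hnotmem (g t) (hsup (hg1 t))⟩
  let u : ℕ → ℕ := fun i => g^[i] 0
  have hcard : ∀ i, (F (u (i + 1))).ncard < (F (u i)).ncard := by
    intro i
    have h1 : u (i + 1) = g (u i) := Function.iterate_succ_apply' g i 0
    rw [h1]
    exact Set.ncard_lt_ncard (hss (u i)) (Set.toFinite _)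
  have key : ∀ i, (F (u i)).ncard + i ≤ (F (u 0)).ncard := by
    intro i
    induction i with
    | zero => simp
    | succ n ih => have := hcard n; omega
  have := key ((F (u 0)).ncard + 1)
  omega

end AuxLemmas

/-- every initial Mealy machine transforms an ultimately recurrent
word to an ultimately recurrent word. -/

theorem transforms_ultimatelyRecurrent {Q A B : Type*} [Fintype Q]
    (M : Mealy Q A B) (q₀ : Q) (x : ℕ → A) (y : ℕ → B)
    (h : M.Transforms q₀ x y) (hx : UltimatelyRecurrent x) :
    UltimatelyRecurrent y := by
  obtain ⟨k, hk⟩ := hx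
  set X : ℕ → A := fun n => x (n + k) with hX
  have hR : ∀ t n N, ∃ m ≥ N, ∀ i < n, X (m + i) = X (t + i) := by
    intro t n N
    obtain ⟨m, hm, hfac⟩ := hk (List.ofFn fun i : Fin n => X (t + i))
      ⟨t, isFactorAt_ofFn X t n⟩ N
    refine ⟨m, hm, fun i hi => ?_⟩
    have h2 := isFactorAt_apply X _ m hfac i (by simpa using hi)
    simp only [List.getElem_ofFn] at h2
    exact h2.symm
  set q : ℕ → Q := fun n => M.stepW q₀ (wordPrefix x n) with hqdef
  have hq : ∀ n, q (n + 1) = M.step (q n) (x n) := by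
    intro n
    show M.stepW q₀ (wordPrefix x (n + 1)) = _
    rw [wordPrefix_succ, Mealy.stepW_append]
    rfl
  have hy : ∀ n, y n = M.out (q n) (x n) := by
    intro n
    have h1 := h (n + 1)
    rw [wordPrefix_succ, wordPrefix_succ, Mealy.outW_append, ← h n] at h1
    have h2 := List.append_cancel_left h1
    simpa [Mealy.outW] using h2
  set p : ℕ → Q := fun n => q (n + k) with hpdef
  obtain ⟨t, ht⟩ := core_lemma X p hR
  have hstep : ∀ n, p (n + 1) = M.step (p n) (X n) := by
    intro n
    show q (n + 1 + k) = _
    have e : n + 1 + k = (n + k) + 1 := by omega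
    rw [e, hq]
  have hprop : ∀ m n, p m = p t → (∀ i < n, X (m + i) = X (t + i)) →
      ∀ i, i ≤ n → p (m + i) = p (t + i) := by
    intro m n h0 hmt i
    induction i with
    | zero => intro _; simpa using h0
    | succ j ih =>
      intro hj
      have e1 : m + (j + 1) = (m + j) + 1 := by omega
      have e2 : t + (j + 1) = (t + j) + 1 := by omega
      rw [e1, e2, hstep, hstep, ih (by omega), hmt j (by omega)]
  refine ⟨t + k, ?_⟩
  have hYpt : ∀ ρ n N, ∃ m' ≥ N, ∀ i < n,
      y (m' + i + (t + k)) = y (ρ + i + (t + k)) := by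
    intro ρ n N
    obtain ⟨m, hm, hpm, hmatch⟩ := ht (ρ + n) (N + t)
    refine ⟨m - t + ρ, by omega, fun i hi => ?_⟩
    have e1 : m - t + ρ + i + (t + k) = (m + (ρ + i)) + k := by omega
    have e2 : ρ + i + (t + k) = (t + (ρ + i)) + k := by omega
    rw [e1, e2, hy, hy]
    have hp2 : p (m + (ρ + i)) = p (t + (ρ + i)) :=
      hprop m (ρ + n) hpm hmatch (ρ + i) (by omega)
    have hx2 : X (m + (ρ + i)) = X (t + (ρ + i)) := hmatch (ρ + i) (by omega)
    have hq2 : q (m + (ρ + i) + k) = q (t + (ρ + i) + k) := hp2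
    have hx3 : x (m + (ρ + i) + k) = x (t + (ρ + i) + k) := hx2
    rw [hq2, hx3]
  intro w hw N
  obtain ⟨ρ, hρ⟩ := hw
  obtain ⟨m', hm', hpt⟩ := hYpt ρ w.length N
  exact ⟨m', hm', isFactorAt_of_ptwise _ w ρ m' hρ hpt⟩
end

section
/- The lattice 𝔏 of machine invariant sets (ordered by inclusion, with join = union and meet = intersection) is not a Boolean lattice: the machine invariant set K of ultimately recurrent words has no complement in 𝔏. Specifically, there exists an infinite word z that is neither ultimately periodic nor ultimately recurrent, together with an ultimately recurrent, non-ultimately-periodic word y such that z ⇀ y; any purported complement K' of K would contain z, hence y, contradicting K ∩ K' = ⊥ (the ultimately periodic words). -/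
section AuxMI

/-! ### 2-adic valuation helpers -/

def v2 (n : ℕ) : ℕ := padicValNat 2 n

lemma v2_pow (k : ℕ) : v2 (2 ^ k) = k := padicValNat.prime_pow k

lemma v2_add {a b K : ℕ} (ha : a ≠ 0) (h1 : v2 a < K) (h2 : 2 ^ K ∣ b) :
    v2 (a + b) = v2 a := by
  rcases eq_or_ne b 0 with rfl | hb
  · simp
  have hab : a + b ≠ 0 := by omega
  have hva : 2 ^ v2 a ∣ a := pow_padicValNat_dvd
  have hvb : 2 ^ v2 a ∣ b := dvd_trans (pow_dvd_pow 2 h1.le) h2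
  have le1 : v2 a ≤ v2 (a + b) :=
    (padicValNat_dvd_iff_le hab).mp (dvd_add hva hvb)
  have h4 : ¬ 2 ^ (v2 a + 1) ∣ a + b := by
    intro h
    have hvb' : 2 ^ (v2 a + 1) ∣ b := dvd_trans (pow_dvd_pow 2 h1) h2
    have hda : 2 ^ (v2 a + 1) ∣ a := by
      have := Nat.dvd_sub h hvb'
      simpa using this
    exact pow_succ_padicValNat_not_dvd ha hda
  have le2 : ¬ (v2 a + 1 ≤ v2 (a + b)) := fun hc =>
    h4 ((padicValNat_dvd_iff_le hab).mpr hc)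
  omega

lemma v2_le (n : ℕ) : v2 (n + 1) ≤ n := by
  have h : 2 ^ v2 (n + 1) ∣ n + 1 := pow_padicValNat_dvd
  have h1 := Nat.le_of_dvd (by omega) h
  have h2 := Nat.lt_two_pow_self (n := v2 (n + 1))
  omega

lemma pow2_add_pow2 {b k a : ℕ} (h : 2 ^ b + 2 ^ k = 2 ^ a) : b = k := by
  by_contra hne
  have hb0 : (2:ℕ) ^ b ≠ 0 := (Nat.pow_pos (n := b) (by norm_num)).ne'
  have hk0 : (2:ℕ) ^ k ≠ 0 := (Nat.pow_pos (n := k) (by norm_num)).ne'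
  rcases Nat.lt_or_ge b k with h1 | h1
  · have hv : v2 (2 ^ b + 2 ^ k) = b := by
      rw [v2_add hb0 (by rw [v2_pow]; exact h1) dvd_rfl, v2_pow]
    rw [h, v2_pow] at hv
    subst hv
    omega
  · have h1' : k < b := by omega
    have hv : v2 (2 ^ k + 2 ^ b) = k := by
      rw [v2_add hk0 (by rw [v2_pow]; exact h1') dvd_rfl, v2_pow]
    rw [Nat.add_comm, h, v2_pow] at hv
    subst hv
    omega

/-! ### The words -/

/-- The period-doubling-style Toeplitz word. -/
def yw (n : ℕ) : ℕ := v2 (n + 1) % 2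

/-- The marked word: `yw` plus markers (value +2) at positions `2^k - 1`. -/
def zw (n : ℕ) : ℕ := yw n + (if n + 1 = 2 ^ (Nat.log 2 (n + 1)) then 2 else 0)

lemma yw_lt (n : ℕ) : yw n < 2 := Nat.mod_lt _ (by norm_num)

lemma zw_lt (n : ℕ) : zw n < 4 := by
  have := yw_lt n
  unfold zw; split <;> omega

lemma zw_mod (n : ℕ) : zw n % 2 = yw n := by
  have := yw_lt n
  unfold zw; split <;> omega

lemma zw_mark (n : ℕ) : 2 ≤ zw n ↔ ∃ k, n + 1 = 2 ^ k := by
  have hy := yw_lt n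
  constructor
  · intro h
    unfold zw at h
    split at h
    · exact ⟨Nat.log 2 (n + 1), by assumption⟩
    · omega
  · rintro ⟨k, hk⟩
    have hl : Nat.log 2 (n + 1) = k := by rw [hk, Nat.log_pow (by norm_num)]
    unfold zw
    rw [hl, if_pos hk]
    omega

/-! ### getElem? characterizations of factors -/

lemma factorAt_elem {x : ℕ → ℕ} {w : List ℕ} {m : ℕ} (hw : IsFactorAt x w m)
    {i : ℕ} (hi : i < w.length) : w[i]? = some (x (m + i)) := by
  conv_lhs => rw [hw]
  simp [List.getElem?_ofFn, List.ofFnNthVal, hi]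

lemma factorAt_of_elem {x : ℕ → ℕ} {w : List ℕ} {m : ℕ}
    (h : ∀ i, i < w.length → w[i]? = some (x (m + i))) : IsFactorAt x w m := by
  rw [IsFactorAt]
  apply List.ext_getElem?
  intro i
  rcases Nat.lt_or_ge i w.length with hi | hi
  · rw [h i hi]
    simp [List.getElem?_ofFn, List.ofFnNthVal, hi]
  · rw [List.getElem?_eq_none hi, List.getElem?_eq_none (by simpa using hi)]

/-! ### eventual periodicity -/

lemma up_period {x : ℕ → ℕ} (h : UltimatelyPeriodic x) :
    ∃ p > 0, ∃ N, ∀ n ≥ N, x (n + p) = x n := by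
  obtain ⟨u, v, hv, rfl⟩ := h
  refine ⟨v.length, List.length_pos_iff.mpr hv, u.length, fun n hn => ?_⟩
  unfold upWord
  rw [dif_neg (by omega), dif_neg (by omega)]
  have hmod : (n + v.length - u.length) % v.length = (n - u.length) % v.length := by
    rw [show n + v.length - u.length = (n - u.length) + v.length from by omega,
      Nat.add_mod_right]
  congr 1
  exact Fin.ext hmod

/-! ### properties of yw -/

lemma yw_shift {n K : ℕ} (t : ℕ) (h : v2 (n + 1) < K) :
    yw (n + t * 2 ^ K) = yw n := by
  unfold yw
  rw [show n + t * 2 ^ K + 1 = (n + 1) + t * 2 ^ K from by ring,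
    v2_add (by omega) h (dvd_mul_left _ t)]

lemma yw_recurrent : Recurrent yw := by
  intro w hw N
  obtain ⟨m₀, hm⟩ := hw
  set K := m₀ + w.length + 1 with hK
  have hpos : 1 ≤ 2 ^ K := Nat.one_le_two_pow
  refine ⟨m₀ + (N + 1) * 2 ^ K, ?_, ?_⟩
  · have : N + 1 ≤ (N + 1) * 2 ^ K := Nat.le_mul_of_pos_right _ (by omega)
    omega
  · apply factorAt_of_elem
    intro i hi
    rw [factorAt_elem hm hi]
    congr 1
    rw [show m₀ + (N + 1) * 2 ^ K + i = (m₀ + i) + (N + 1) * 2 ^ K from by ring]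
    rw [yw_shift (N + 1) (by have := v2_le (m₀ + i); omega)]

lemma yw_not_up : ¬ UltimatelyPeriodic yw := by
  intro h
  obtain ⟨p, hp, N, hper⟩ := up_period h
  set a := v2 p with ha
  have key : ∀ K, a < K → N ≤ 2 ^ K - 1 → K % 2 = a % 2 := by
    intro K hK hN
    have hpos : 1 ≤ 2 ^ K := Nat.one_le_two_pow
    have h1 : yw (2 ^ K - 1) = K % 2 := by
      unfold yw
      rw [show 2 ^ K - 1 + 1 = 2 ^ K from by omega, v2_pow]
    have h2 : yw (2 ^ K - 1 + p) = a % 2 := by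
      unfold yw
      rw [show 2 ^ K - 1 + p + 1 = p + 1 * 2 ^ K from by omega,
        v2_add (by omega) hK (dvd_mul_left _ 1)]
    have := hper (2 ^ K - 1) hN
    rw [h1, h2] at this
    omega
  have hlt1 := Nat.lt_two_pow_self (n := a + N + 1)
  have hlt2 := Nat.lt_two_pow_self (n := a + N + 2)
  have k1 := key (a + N + 1) (by omega) (by omega)
  have k2 := key (a + N + 2) (by omega) (by omega)
  omega

/-! ### properties of zw -/

lemma zw_not_up : ¬ UltimatelyPeriodic zw := by
  intro h
  obtain ⟨p, hp, N, hper⟩ := up_period h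
  set k := N + p + 1 with hk
  have hlt := Nat.lt_two_pow_self (n := k)
  have hpos : 1 ≤ 2 ^ k := Nat.one_le_two_pow
  have hm : 2 ≤ zw (2 ^ k - 1) := (zw_mark _).mpr ⟨k, by omega⟩
  have hm2 : 2 ≤ zw (2 ^ k - 1 + p) := by
    rw [hper _ (by omega)]; exact hm
  obtain ⟨a, hA⟩ := (zw_mark _).mp hm2
  have h2 : 2 ^ k + p = 2 ^ a := by omega
  rcases le_or_gt a k with hak | hak
  · have : (2:ℕ) ^ a ≤ 2 ^ k := Nat.pow_le_pow_right (by norm_num) hak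
    omega
  · have : (2:ℕ) ^ (k + 1) ≤ 2 ^ a := Nat.pow_le_pow_right (by norm_num) hak
    have hkk : 2 ^ (k + 1) = 2 * 2 ^ k := by ring
    omega

lemma zw_not_ur : ¬ UltimatelyRecurrent zw := by
  rintro ⟨s, hrec⟩
  set k := s + 1 with hk
  have hlt := Nat.lt_two_pow_self (n := k)
  have hpos : 1 ≤ 2 ^ k := Nat.one_le_two_pow
  set w : List ℕ := List.ofFn (fun i : Fin (2 ^ k + 1) => zw (2 ^ k - 1 + i)) with hw
  have hwlen : w.length = 2 ^ k + 1 := by simp [hw]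
  have hwget : ∀ i, i < 2 ^ k + 1 → w[i]? = some (zw (2 ^ k - 1 + i)) := by
    intro i hi
    simp only [hw, List.getElem?_ofFn, List.ofFnNthVal, dif_pos hi]
  have hfac : IsFactor (fun n => zw (n + s)) w := by
    refine ⟨2 ^ k - 1 - s, factorAt_of_elem fun i hi => ?_⟩
    rw [hwget i (by omega)]
    congr 2
    omega
  obtain ⟨m, hmN, hmfac⟩ := hrec w hfac (2 ^ k)
  have ev : ∀ i, i < 2 ^ k + 1 → zw (m + i + s) = zw (2 ^ k - 1 + i) := by
    intro i hi
    have h1 := factorAt_elem hmfac (i := i) (by omega)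
    rw [hwget i hi] at h1
    have h2 := Option.some.inj h1
    simpa using h2.symm
  have hz0 : 2 ≤ zw (m + 0 + s) := by
    rw [ev 0 (by omega)]
    exact (zw_mark _).mpr ⟨k, by omega⟩
  have hz1 : 2 ≤ zw (m + 2 ^ k + s) := by
    rw [ev (2 ^ k) (by omega)]
    refine (zw_mark _).mpr ⟨k + 1, ?_⟩
    have h2 : (2:ℕ) ^ (k + 1) = 2 ^ k + 2 ^ k := by
      rw [pow_succ]
      ring
    omega
  obtain ⟨b, hb⟩ := (zw_mark _).mp hz0
  obtain ⟨c, hc⟩ := (zw_mark _).mp hz1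
  have heq : 2 ^ b + 2 ^ k = 2 ^ c := by omega
  have hbk : b = k := pow2_add_pow2 heq
  subst hbk
  omega

end AuxMI
/-! ### the machine -/

lemma outW_one {A B : Type*} (M : Mealy (Fin 1) A B) (q : Fin 1) (l : List A) :
    M.outW q l = l.map (M.out q) := by
  induction l generalizing q with
  | nil => rfl
  | cons a u ih =>
    have h : M.step q a = q := Subsingleton.elim _ _
    rw [Mealy.outW, h, ih, List.map]

def theMachine : MachineN where
  k := 1
  A := Finset.range 4
  B := Finset.range 2
  M := { step := fun _ _ => 0,
         out := fun _ a => ⟨(a : ℕ) % 2, Finset.mem_range.mpr (Nat.mod_lt _ (by norm_num))⟩ }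
  q₀ := 0

lemma trans_zw_yw : TransN zw yw := by
  refine ⟨theMachine, fun n => ⟨zw n, Finset.mem_range.mpr (zw_lt n)⟩,
    fun n => ⟨yw n, Finset.mem_range.mpr (yw_lt n)⟩, fun n => rfl, fun n => rfl, ?_⟩
  intro n
  unfold wordPrefix
  refine Eq.trans ?_ (outW_one (M := theMachine.M) _ _).symm
  rw [List.map_ofFn]
  congr 1
  funext i
  apply Subtype.ext
  exact (zw_mod i).symm

lemma yw_ur : UltimatelyRecurrent yw := by
  refine ⟨0, ?_⟩
  have h : (fun n => yw (n + 0)) = yw := by funext n; simp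
  rw [h]
  exact yw_recurrent

lemma zw_fwords : zw ∈ FWords :=
  Set.Finite.subset (Set.finite_Iio 4) (by rintro _ ⟨n, rfl⟩; exact zw_lt n)

lemma yw_fwords : yw ∈ FWords :=
  Set.Finite.subset (Set.finite_Iio 2) (by rintro _ ⟨n, rfl⟩; exact yw_lt n)

/-- the lattice of machine invariant sets is not Boolean: the
machine invariant set of ultimately recurrent words has no complement.
Moreover there are words `z ⇀ y` with `z` neither ultimately periodic nor
ultimately recurrent and `y` ultimately recurrent but not ultimately periodic. -/

theorem not_boolean :
    (¬ ∃ K' : Set (ℕ → ℕ), MachineInvariant K' ∧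
        {x ∈ FWords | UltimatelyRecurrent x} ∩ K'
          = {x ∈ FWords | UltimatelyPeriodic x} ∧
        {x ∈ FWords | UltimatelyRecurrent x} ∪ K' = FWords) ∧
    ∃ z y : ℕ → ℕ, z ∈ FWords ∧ y ∈ FWords ∧
      ¬ UltimatelyPeriodic z ∧ ¬ UltimatelyRecurrent z ∧
      UltimatelyRecurrent y ∧ ¬ UltimatelyPeriodic y ∧ TransN z y := by
  constructor
  · rintro ⟨K', ⟨hne, hsub, hinv⟩, hmeet, hjoin⟩
    have hzK' : zw ∈ K' := by
      have hmem : zw ∈ {x ∈ FWords | UltimatelyRecurrent x} ∪ K' := by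
        rw [hjoin]; exact zw_fwords
      rcases hmem with h | h
      · exact absurd h.2 zw_not_ur
      · exact h
    have hyK' : yw ∈ K' := hinv zw hzK' yw trans_zw_yw
    have hy : yw ∈ {x ∈ FWords | UltimatelyRecurrent x} ∩ K' :=
      ⟨⟨yw_fwords, yw_ur⟩, hyK'⟩
    rw [hmeet] at hy
    exact yw_not_up hy.2
  · exact ⟨zw, yw, zw_fwords, yw_fwords, zw_not_up, zw_not_ur, yw_ur,
      yw_not_up, trans_zw_yw⟩
end
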